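/- arXiv:math/0410143 — 4 statements merged into one kernel-verified Lean document; each statement's English description precedes it below -/
import Mathlib

section
/- The class of indicator functions of convex closed subsets of [-1/2,1/2]^d is L^2-equicontinuous under translations: for every ε > 0 there is δ > 0 such that for all convex closed C ⊆ [-1/2,1/2]^d and all w ∈ R^d with |w|_2 < δ, ∫_{R^d} (1_C(x) - 1_C(x+w))^2 dx < ε. -/
open MeasureTheory Metric

/-- The unit cube `[-1/2, 1/2]^d` in `ℝ^d`. -/
def unitCube (d : ℕ) : Set (EuclideanSpace ℝ (Fin d)) := {x | ∀ i, |x i| ≤ 1/2}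

open Set

/-- 1D estimate: translating a bounded interval-like set by `t` changes it by at most `4|t|`. -/
lemma oneD_bound (s : Set ℝ) (hconv : s.OrdConnected) (hcl : IsClosed s)
    (hsub : s ⊆ Set.Icc (-(1/2) : ℝ) (1/2)) (t : ℝ) :
    volume (symmDiff s ((· + t) ⁻¹' s)) ≤ ENNReal.ofReal (4 * |t|) := by
  rcases s.eq_empty_or_nonempty with rfl | hne
  · simp
  have hbb : BddBelow s := (bddBelow_Icc : BddBelow (Set.Icc (-(1/2):ℝ) (1/2))).mono hsub
  have hba : BddAbove s := (bddAbove_Icc : BddAbove (Set.Icc (-(1/2):ℝ) (1/2))).mono hsub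
  set a := sInf s with ha'
  set b := sSup s with hb'
  have ha : a ∈ s := hcl.csInf_mem hne hbb
  have hb : b ∈ s := hcl.csSup_mem hne hba
  have hLT : -|t| ≤ t := neg_abs_le t
  have hGT : t ≤ |t| := le_abs_self t
  have hsubset : symmDiff s ((· + t) ⁻¹' s) ⊆
      Set.Icc (a - |t|) (a + |t|) ∪ Set.Icc (b - |t|) (b + |t|) := by
    intro x hx
    rw [Set.mem_symmDiff] at hx
    rcases hx with ⟨hxs, hxt⟩ | ⟨hxt, hxs⟩
    · have h1 : a ≤ x := csInf_le hbb hxs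
      have h2 : x ≤ b := le_csSup hba hxs
      have h3 : x + t < a ∨ b < x + t := by
        by_contra h
        push_neg at h
        exact hxt (hconv.out ha hb ⟨h.1, h.2⟩)
      rcases h3 with h3 | h3
      · exact Or.inl ⟨by linarith, by linarith⟩
      · exact Or.inr ⟨by linarith, by linarith⟩
    · have hxt' : x + t ∈ s := hxt
      have h1 : a ≤ x + t := csInf_le hbb hxt'
      have h2 : x + t ≤ b := le_csSup hba hxt'
      have h3 : x < a ∨ b < x := by
        by_contra h
        push_neg at h
        exact hxs (hconv.out ha hb ⟨h.1, h.2⟩)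
      rcases h3 with h3 | h3
      · exact Or.inl ⟨by linarith, by linarith⟩
      · exact Or.inr ⟨by linarith, by linarith⟩
  refine (measure_mono hsubset).trans ((measure_union_le _ _).trans ?_)
  rw [Real.volume_Icc, Real.volume_Icc]
  have e1 : a + |t| - (a - |t|) = 2 * |t| := by ring
  have e2 : b + |t| - (b - |t|) = 2 * |t| := by ring
  rw [e1, e2, ← ENNReal.ofReal_add (by positivity) (by positivity)]
  apply le_of_eq
  congr 1
  ring

lemma insertNth_add_single {n : ℕ} (k : Fin (n+1)) (a t : ℝ) (y : Fin n → ℝ) :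
    Fin.insertNth (α := fun _ => ℝ) k a y + Pi.single k t
      = Fin.insertNth (α := fun _ => ℝ) k (a + t) y := by
  funext j
  rcases eq_or_ne j k with rfl | hj
  · simp
  · obtain ⟨m, rfl⟩ := Fin.exists_succAbove_eq hj
    simp [Pi.single_eq_of_ne (Fin.succAbove_ne k m)]

lemma insertNth_comb {n : ℕ} (k : Fin (n+1)) (p q a b : ℝ) (y z : Fin n → ℝ) :
    p • Fin.insertNth (α := fun _ => ℝ) k a y + q • Fin.insertNth (α := fun _ => ℝ) k b z
      = Fin.insertNth (α := fun _ => ℝ) k (p * a + q * b) (p • y + q • z) := by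
  funext j
  rcases eq_or_ne j k with rfl | hj
  · simp
  · obtain ⟨m, rfl⟩ := Fin.exists_succAbove_eq hj
    simp

/-- The single-coordinate translation estimate for convex subsets of the unit cube. -/
lemma single_coord_bound {n : ℕ} (C : Set (Fin (n+1) → ℝ)) (hconv : Convex ℝ C)
    (hcl : IsClosed C) (hsub : ∀ x ∈ C, ∀ i, |x i| ≤ 1/2) (k : Fin (n+1)) (t : ℝ) :
    volume (symmDiff C ((· + Pi.single k t) ⁻¹' C)) ≤ ENNReal.ofReal (4 * |t|) := by
  classical
  have hCm : MeasurableSet C := hcl.measurableSet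
  have hTm : MeasurableSet ((· + (Pi.single k t : Fin (n+1) → ℝ)) ⁻¹' C) :=
    hCm.preimage ((continuous_id.add continuous_const).measurable)
  have hDm : MeasurableSet (symmDiff C ((· + Pi.single k t) ⁻¹' C)) := hCm.symmDiff hTm
  set e := MeasurableEquiv.piFinSuccAbove (fun _ : Fin (n+1) => ℝ) k with he
  have hvol := (MeasurePreserving.symm _
    (volume_preserving_piFinSuccAbove (fun _ : Fin (n+1) => ℝ) k)).measure_preimage_equiv
    (symmDiff C ((· + Pi.single k t) ⁻¹' C))
  rw [← hvol, Measure.volume_eq_prod, Measure.prod_apply_symm (hDm.preimage e.symm.measurable)]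
  set S : (Fin n → ℝ) → Set ℝ := fun y => {c | Fin.insertNth k c y ∈ C} with hS
  have hslice : ∀ y : Fin n → ℝ,
      (fun x => (x, y)) ⁻¹' (e.symm ⁻¹' (symmDiff C ((· + Pi.single k t) ⁻¹' C)))
        = symmDiff (S y) ((· + t) ⁻¹' (S y)) := by
    intro y
    ext c
    have h1 : e.symm (c, y) = Fin.insertNth k c y := rfl
    have h2 : e.symm (c, y) + Pi.single k t = Fin.insertNth k (c + t) y := by
      rw [h1, insertNth_add_single]
    simp only [Set.mem_preimage, Set.mem_symmDiff, h1, hS, Set.mem_setOf_eq,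
      insertNth_add_single]
  have hQ : MeasurableSet (Set.univ.pi fun _ : Fin n => Set.Icc (-(1/2):ℝ) (1/2)) :=
    MeasurableSet.univ_pi fun _ => measurableSet_Icc
  calc ∫⁻ y, volume ((fun x => (x, y)) ⁻¹'
        (e.symm ⁻¹' (symmDiff C ((· + Pi.single k t) ⁻¹' C))))
      ≤ ∫⁻ y, (Set.univ.pi fun _ : Fin n => Set.Icc (-(1/2):ℝ) (1/2)).indicator
          (fun _ => ENNReal.ofReal (4 * |t|)) y := by
        refine lintegral_mono fun y => ?_
        rw [hslice y]
        by_cases hy : y ∈ Set.univ.pi fun _ : Fin n => Set.Icc (-(1/2):ℝ) (1/2)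
        · rw [Set.indicator_of_mem hy]
          have hconvS : Convex ℝ (S y) := by
            intro c hc c' hc' p q hp hq hpq
            have h := hconv hc hc' hp hq hpq
            have hrw : p • Fin.insertNth (α := fun _ => ℝ) k c y
                  + q • Fin.insertNth (α := fun _ => ℝ) k c' y
                = Fin.insertNth (α := fun _ => ℝ) k (p * c + q * c') y := by
              rw [insertNth_comb, ← add_smul, hpq, one_smul]
            rw [hrw] at h
            exact h
          have hcont : Continuous fun c : ℝ => Fin.insertNth (α := fun _ => ℝ) k c y := by
            refine continuous_pi fun j => ?_
            rcases eq_or_ne j k with rfl | hj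
            · simpa using continuous_id'
            · obtain ⟨m, rfl⟩ := Fin.exists_succAbove_eq hj
              simpa using (continuous_const : Continuous fun _ : ℝ => y m)
          refine oneD_bound (S y) hconvS.ordConnected (hcl.preimage hcont) ?_ t
          intro c hc
          have := hsub _ hc k
          rw [Fin.insertNth_apply_same] at this
          exact abs_le.1 this
        · rw [Set.indicator_of_notMem hy]
          have hSe : S y = ∅ := by
            rw [Set.eq_empty_iff_forall_notMem]
            intro c hc
            refine hy fun m _ => ?_
            have := hsub _ hc (k.succAbove m)
            rw [Fin.insertNth_apply_succAbove] at this
            exact abs_le.1 this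
          rw [hSe]
          simp
    _ = ENNReal.ofReal (4 * |t|) *
          volume (Set.univ.pi fun _ : Fin n => Set.Icc (-(1/2):ℝ) (1/2)) :=
        lintegral_indicator_const hQ _
    _ ≤ ENNReal.ofReal (4 * |t|) := by
        rw [volume_pi_pi]
        simp only [Real.volume_Icc]
        norm_num

/-- Main estimate in the `pi` model. -/
lemma pi_bound {d : ℕ} (C : Set (Fin d → ℝ)) (hconv : Convex ℝ C) (hcl : IsClosed C)
    (hsub : ∀ x ∈ C, ∀ i, |x i| ≤ 1/2) (w : Fin d → ℝ) :
    volume (symmDiff C ((· + w) ⁻¹' C)) ≤ ENNReal.ofReal (∑ i, 4 * |w i|) := by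
  classical
  cases d with
  | zero =>
    have hw : w = 0 := Subsingleton.elim _ _
    subst hw
    have h0 : (· + (0 : Fin 0 → ℝ)) = (id : (Fin 0 → ℝ) → (Fin 0 → ℝ)) :=
      funext fun x => add_zero x
    rw [h0, Set.preimage_id, symmDiff_self]
    simp
  | succ n =>
    set f : (Fin (n+1) → ℝ) → ENNReal := fun v => volume (symmDiff C ((· + v) ⁻¹' C)) with hf
    have hsubadd : ∀ u v, f (u + v) ≤ f u + f v := by
      intro u v
      have h1 : (· + u) ⁻¹' ((· + v) ⁻¹' C) = (· + (u + v)) ⁻¹' C := by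
        ext x; simp [Set.mem_preimage, add_assoc]
      have hmono : symmDiff C ((· + (u + v)) ⁻¹' C) ⊆
          symmDiff C ((· + u) ⁻¹' C) ∪ ((· + u) ⁻¹' (symmDiff C ((· + v) ⁻¹' C))) := by
        rw [Set.preimage_symmDiff, h1]
        exact symmDiff_triangle _ _ _
      calc f (u + v) ≤ volume (symmDiff C ((· + u) ⁻¹' C) ∪
            ((· + u) ⁻¹' (symmDiff C ((· + v) ⁻¹' C)))) := measure_mono hmono
        _ ≤ f u + volume ((· + u) ⁻¹' (symmDiff C ((· + v) ⁻¹' C))) := measure_union_le _ _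
        _ = f u + f v := by rw [measure_preimage_add_right]
    have key : ∀ s : Finset (Fin (n+1)),
        f (∑ i ∈ s, Pi.single i (w i)) ≤ ∑ i ∈ s, ENNReal.ofReal (4 * |w i|) := by
      intro s
      induction s using Finset.cons_induction with
      | empty =>
        have h0 : (· + (0 : Fin (n+1) → ℝ)) = (id : (Fin (n+1) → ℝ) → (Fin (n+1) → ℝ)) :=
          funext fun x => add_zero x
        simp [hf, h0, Set.preimage_id, symmDiff_self]
      | cons a s ha ih =>
        rw [Finset.sum_cons, Finset.sum_cons]
        exact (hsubadd _ _).trans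
          (add_le_add (single_coord_bound C hconv hcl hsub a (w a)) ih)
    have hw : ∑ i, Pi.single i (w i) = w := Finset.univ_sum_single w
    calc volume (symmDiff C ((· + w) ⁻¹' C)) = f (∑ i, Pi.single i (w i)) := by rw [hw]
      _ ≤ ∑ i, ENNReal.ofReal (4 * |w i|) := key Finset.univ
      _ = ENNReal.ofReal (∑ i, 4 * |w i|) :=
        (ENNReal.ofReal_sum_of_nonneg fun i _ => by positivity).symm

/-- The class of indicators of convex closed subsets of `[-1/2,1/2]^d` is `L²`-equicontinuous
under translations. -/
theorem stmt_2 (d : ℕ) :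
    ∀ ε : ℝ, 0 < ε → ∃ δ : ℝ, 0 < δ ∧
      ∀ C : Set (EuclideanSpace ℝ (Fin d)), Convex ℝ C → IsClosed C → C ⊆ unitCube d →
      ∀ w : EuclideanSpace ℝ (Fin d), ‖w‖ < δ →
        (∫ x, (Set.indicator C (fun _ => (1:ℝ)) x - Set.indicator C (fun _ => (1:ℝ)) (x + w)) ^ 2)
          < ε := by
  intro ε hε
  refine ⟨ε / (4 * d + 1), by positivity, ?_⟩
  intro C hconv hcl hsubcube w hw
  have hCm : MeasurableSet C := hcl.measurableSet
  have hTm : MeasurableSet ((· + w) ⁻¹' C) :=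
    hCm.preimage ((continuous_id.add continuous_const).measurable)
  set D := symmDiff C ((· + w) ⁻¹' C) with hD
  have hDm : MeasurableSet D := hCm.symmDiff hTm
  have hint : (fun x => (Set.indicator C (fun _ => (1:ℝ)) x
      - Set.indicator C (fun _ => (1:ℝ)) (x + w)) ^ 2) = D.indicator (fun _ => (1:ℝ)) := by
    funext x
    by_cases hx : x ∈ C <;> by_cases hx' : x + w ∈ C <;>
      simp [hD, Set.indicator_apply, Set.mem_symmDiff, hx, hx', Set.mem_preimage]
  rw [hint, integral_indicator_const (1:ℝ) hDm, smul_eq_mul, mul_one]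
  -- transport to the pi model
  set e := (MeasurableEquiv.toLp 2 (Fin d → ℝ)).symm with he
  have hmp := (EuclideanSpace.volume_preserving_symm_measurableEquiv_toLp (Fin d)).symm
  have hvol : volume (e.symm ⁻¹' D) = volume D := hmp.measure_preimage_equiv D
  set C' : Set (Fin d → ℝ) := e.symm ⁻¹' C with hC'
  have hpre : e.symm ⁻¹' D = symmDiff C' ((· + (e w)) ⁻¹' C') := by
    rw [hD, Set.preimage_symmDiff]
    rfl
  have hconv' : Convex ℝ C' := hconv.linear_preimage (WithLp.linearEquiv 2 ℝ (Fin d → ℝ)).symm.toLinearMap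
  have hcl' : IsClosed C' := by
    have hcont : Continuous (⇑e.symm) := by
      exact PiLp.continuous_toLp 2 (fun _ : Fin d => ℝ)
    exact hcl.preimage hcont
  have hsub' : ∀ x ∈ C', ∀ i, |x i| ≤ 1/2 := fun x hx i => hsubcube hx i
  have hbound : volume D ≤ ENNReal.ofReal (∑ i, 4 * |w i|) := by
    rw [← hvol, hpre]
    exact pi_bound C' hconv' hcl' hsub' (e w)
  have htr : (volume D).toReal ≤ ∑ i, 4 * |w i| :=
    ENNReal.toReal_le_of_le_ofReal (by positivity) hbound
  have hcoord : ∀ i, |w i| ≤ ‖w‖ := by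
    intro i
    rw [EuclideanSpace.norm_eq]
    have h1 : |w i| = Real.sqrt (‖w i‖ ^ 2) := by
      rw [Real.sqrt_sq_eq_abs, Real.norm_eq_abs, abs_abs]
    rw [h1]
    exact Real.sqrt_le_sqrt (Finset.single_le_sum (f := fun j => ‖w j‖ ^ 2)
      (fun j _ => by positivity) (Finset.mem_univ i))
  have hsum : ∑ i, 4 * |w i| ≤ 4 * d * ‖w‖ := by
    calc ∑ i : Fin d, 4 * |w i| ≤ ∑ _i : Fin d, 4 * ‖w‖ :=
          Finset.sum_le_sum fun i _ => by
            have := hcoord i; nlinarith [abs_nonneg (w i)]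
      _ = 4 * d * ‖w‖ := by
          rw [Finset.sum_const, Finset.card_univ, Fintype.card_fin, nsmul_eq_mul]
          ring
  have hfin : 4 * (d:ℝ) * ‖w‖ < ε := by
    have hδ : (0:ℝ) < 4 * d + 1 := by positivity
    have h1 : 4 * (d:ℝ) * ‖w‖ ≤ 4 * d * (ε / (4 * d + 1)) := by
      have : (0:ℝ) ≤ 4 * d := by positivity
      exact mul_le_mul_of_nonneg_left hw.le this
    have h2 : 4 * (d:ℝ) * (ε / (4 * d + 1)) < ε := by
      rw [← mul_div_assoc, div_lt_iff₀ hδ]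
      nlinarith [hε, Nat.cast_nonneg (α := ℝ) d]
    linarith
  rw [measureReal_def]
  linarith
end

section
/- Generalized Ottaviani inequality: Let Λ be a countable index set, B a separable Banach space, and {S_m(t) : t ∈ Λ, 0 ≤ m ≤ n} processes with values in B, S_0(t) = 0, such that for each 1 ≤ m ≤ n the process {S_n(t) - S_m(t) : t ∈ Λ} is independent of {S_k(t) : t ∈ Λ, 1 ≤ k ≤ m}. Suppose that for some τ > 0, c := max_{0 ≤ m ≤ n} sup_{t ∈ Λ} P(‖S_n(t) - S_m(t)‖ ≥ τ) < 1. Then for every Borel set A ⊆ B and every ε > 0, P(∃ t ∈ Λ, ∃ 1 ≤ m ≤ n : S_m(t) ∉ A^{ε+τ}) ≤ (1-c)^{-1} P(∃ t ∈ Λ : S_n(t) ∉ A^ε). -/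
open MeasureTheory Metric ProbabilityTheory

/-- Generalized Ottaviani inequality for processes indexed by a countable set `ι` with values in a
separable Banach space `B`. -/
theorem stmt_6 {Ω : Type*} [MeasurableSpace Ω] (P : Measure Ω) [IsProbabilityMeasure P]
    {B : Type*} [NormedAddCommGroup B] [NormedSpace ℝ B] [CompleteSpace B]
    [TopologicalSpace.SeparableSpace B] [MeasurableSpace B] [BorelSpace B]
    {ι : Type*} [Countable ι]
    (n : ℕ) (S : ℕ → ι → Ω → B)
    (hmeas : ∀ m t, Measurable (S m t))
    (hS0 : ∀ t ω, S 0 t ω = 0)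
    (hindep : ∀ m, 1 ≤ m → m ≤ n →
      Indep (⨆ t : ι, MeasurableSpace.comap (fun ω => S n t ω - S m t ω) inferInstance)
        (⨆ k ∈ Set.Icc 1 m, ⨆ t : ι, MeasurableSpace.comap (S k t) inferInstance) P)
    (τ c : ℝ) (hτ : 0 < τ) (hc0 : 0 ≤ c) (hc1 : c < 1)
    (hcb : ∀ m ≤ n, ∀ t, (P {ω | τ ≤ ‖S n t ω - S m t ω‖}).toReal ≤ c)
    (A : Set B) (hA : MeasurableSet A) (ε : ℝ) (hε : 0 < ε) :
    P {ω | ∃ t, ∃ m, 1 ≤ m ∧ m ≤ n ∧ S m t ω ∉ thickening (ε + τ) A} ≤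
      ENNReal.ofReal (1 - c)⁻¹ * P {ω | ∃ t, S n t ω ∉ thickening ε A} := by
  classical
  obtain ⟨e, he⟩ := Countable.exists_injective_nat ι
  set δ : ℝ := ε + τ with hδ
  -- rank function into the lexicographic well-order
  set r : ℕ × ι → ℕ ×ₗ ℕ := fun p => toLex (p.1, e p.2) with hrdef
  have hr : Function.Injective r := by
    intro p q h
    have h' : (p.1, e p.2) = (q.1, e q.2) := toLex.injective h
    obtain ⟨h1, h2⟩ := Prod.mk.injEq _ _ _ _ ▸ h'
    exact Prod.ext_iff.mpr ⟨h1, he h2⟩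
  -- Bad events
  set Bad : ℕ × ι → Set Ω :=
    fun p => {ω | 1 ≤ p.1 ∧ p.1 ≤ n ∧ S p.1 p.2 ω ∉ thickening δ A} with hBaddef
  set E : ℕ × ι → Set Ω := fun p => Bad p ∩ ⋂ q, ⋂ (_ : r q < r p), (Bad q)ᶜ with hEdef
  set F : Set Ω := {ω | ∃ t, S n t ω ∉ thickening ε A} with hFdef
  have hthick : MeasurableSet (thickening δ A) := isOpen_thickening.measurableSet
  -- measurability of Bad
  have hBadeq : ∀ p, 1 ≤ p.1 → p.1 ≤ n → Bad p = S p.1 p.2 ⁻¹' (thickening δ A)ᶜ := by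
    intro p h1 h2
    ext ω
    simp only [hBaddef, Set.mem_setOf_eq, Set.mem_preimage, Set.mem_compl_iff]
    exact ⟨fun h => h.2.2, fun h => ⟨h1, h2, h⟩⟩
  have hBadempty : ∀ p, ¬(1 ≤ p.1 ∧ p.1 ≤ n) → Bad p = ∅ := by
    intro p h
    ext ω
    simp only [hBaddef, Set.mem_setOf_eq, Set.mem_empty_iff_false, iff_false]
    rintro ⟨h1, h2, _⟩
    exact h ⟨h1, h2⟩
  have hBadm : ∀ p, MeasurableSet (Bad p) := by
    intro p
    by_cases h : 1 ≤ p.1 ∧ p.1 ≤ n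
    · rw [hBadeq p h.1 h.2]
      exact (hmeas _ _) hthick.compl
    · rw [hBadempty p h]
      exact MeasurableSet.empty
  have hEm : ∀ p, MeasurableSet (E p) :=
    fun p => (hBadm p).inter
      (MeasurableSet.iInter fun q => MeasurableSet.iInter fun _ => (hBadm q).compl)
  have hFm : MeasurableSet F := by
    have : F = ⋃ t, S n t ⁻¹' (thickening ε A)ᶜ := by
      ext ω; simp [hFdef]
    rw [this]
    exact MeasurableSet.iUnion fun t => (hmeas _ _) isOpen_thickening.measurableSet.compl
  -- the filtration-type σ-algebras
  set 𝔪 : ℕ → MeasurableSpace Ω :=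
    fun m => ⨆ k ∈ Set.Icc 1 m, ⨆ t : ι, MeasurableSpace.comap (S k t) inferInstance with h𝔪
  have hsub : ∀ (k : ℕ) (t : ι) (u : Set B), MeasurableSet u → ∀ m, 1 ≤ k → k ≤ m →
      MeasurableSet[𝔪 m] (S k t ⁻¹' u) := by
    intro k t u hu m hk1 hkm
    have h1 : MeasurableSet[MeasurableSpace.comap (S k t) inferInstance] (S k t ⁻¹' u) :=
      ⟨u, hu, rfl⟩
    have h2 : MeasurableSpace.comap (S k t) inferInstance ≤ 𝔪 m := by
      refine le_trans (le_iSup (fun t : ι => MeasurableSpace.comap (S k t) inferInstance) t) ?_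
      exact le_iSup₂ (f := fun k (_ : k ∈ Set.Icc 1 m) =>
        ⨆ t : ι, MeasurableSpace.comap (S k t) inferInstance) k ⟨hk1, hkm⟩
    exact h2 _ h1
  -- E p is measurable w.r.t. 𝔪 p.1 for valid p
  have hE𝔪 : ∀ p : ℕ × ι, 1 ≤ p.1 → p.1 ≤ n → MeasurableSet[𝔪 p.1] (E p) := by
    intro p h1 h2
    refine MeasurableSet.inter ?_ ?_
    · rw [hBadeq p h1 h2]
      exact hsub p.1 p.2 _ hthick.compl p.1 h1 le_rfl
    · refine MeasurableSet.iInter fun q => MeasurableSet.iInter fun hq => ?_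
      by_cases hv : 1 ≤ q.1 ∧ q.1 ≤ n
      · have hle : q.1 ≤ p.1 := by
          rcases Prod.Lex.lt_iff.mp hq with h | h
          · exact le_of_lt h
          · exact le_of_eq h.1
        have hcc : (Bad q)ᶜ = S q.1 q.2 ⁻¹' (thickening δ A) := by
          rw [hBadeq q hv.1 hv.2, ← Set.preimage_compl, compl_compl]
        rw [hcc]
        exact hsub q.1 q.2 _ hthick p.1 hv.1 hle
      · rw [hBadempty q hv, Set.compl_empty]
        exact MeasurableSet.univ
  -- the good events
  set G : ℕ × ι → Set Ω := fun p => {ω | ‖S n p.2 ω - S p.1 p.2 ω‖ < τ} with hGdef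
  have hGeq : ∀ p, G p = (fun ω => S n p.2 ω - S p.1 p.2 ω) ⁻¹' Metric.ball 0 τ := by
    intro p; ext ω
    simp [hGdef, mem_ball_zero_iff]
  have hGm : ∀ p, MeasurableSet (G p) := by
    intro p
    rw [hGeq]
    exact ((hmeas n p.2).sub (hmeas p.1 p.2)) measurableSet_ball
  -- lower bound on P (G p)
  have hGlb : ∀ p : ℕ × ι, p.1 ≤ n → ENNReal.ofReal (1 - c) ≤ P (G p) := by
    intro p hpn
    have hcompl : (G p)ᶜ = {ω | τ ≤ ‖S n p.2 ω - S p.1 p.2 ω‖} := by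
      ext ω; simp [hGdef, not_lt]
    have hc' : P (G p)ᶜ ≤ ENNReal.ofReal c := by
      rw [hcompl]
      have h1 := hcb p.1 hpn p.2
      have h2 : P {ω | τ ≤ ‖S n p.2 ω - S p.1 p.2 ω‖} ≠ ⊤ := measure_ne_top _ _
      rw [← ENNReal.ofReal_toReal h2]
      exact ENNReal.ofReal_le_ofReal h1
    have hPG : P (G p) = 1 - P (G p)ᶜ := by
      have := prob_compl_eq_one_sub (μ := P) (hGm p).compl
      rwa [compl_compl] at this
    rw [hPG]
    calc ENNReal.ofReal (1 - c) = 1 - ENNReal.ofReal c := by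
          rw [ENNReal.ofReal_sub 1 hc0, ENNReal.ofReal_one]
      _ ≤ 1 - P (G p)ᶜ := tsub_le_tsub_left hc' 1
  -- G p ∩ E p ⊆ E p ∩ F
  have hGEF : ∀ p : ℕ × ι, G p ∩ E p ⊆ E p ∩ F := by
    rintro p ω ⟨hG, hE⟩
    refine ⟨hE, ?_⟩
    obtain ⟨_, _, hnot⟩ := hE.1
    refine ⟨p.2, fun hmem => hnot ?_⟩
    rw [mem_thickening_iff_infEdist_lt] at hmem ⊢
    calc EMetric.infEdist (S p.1 p.2 ω) A
        ≤ EMetric.infEdist (S n p.2 ω) A + edist (S p.1 p.2 ω) (S n p.2 ω) :=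
          EMetric.infEdist_le_infEdist_add_edist
      _ < ENNReal.ofReal ε + ENNReal.ofReal τ := by
          refine ENNReal.add_lt_add hmem ?_
          rw [edist_dist, dist_eq_norm, norm_sub_rev]
          exact (ENNReal.ofReal_lt_ofReal_iff hτ).mpr hG
      _ = ENNReal.ofReal δ := by rw [hδ, ENNReal.ofReal_add hε.le hτ.le]
  -- key per-index estimate
  have key : ∀ p : ℕ × ι, ENNReal.ofReal (1 - c) * P (E p) ≤ P (E p ∩ F) := by
    intro p
    by_cases hv : 1 ≤ p.1 ∧ p.1 ≤ n
    · have hGmem : MeasurableSet[⨆ t : ι,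
          MeasurableSpace.comap (fun ω => S n t ω - S p.1 t ω) inferInstance] (G p) := by
        have h1 : MeasurableSet[MeasurableSpace.comap
            (fun ω => S n p.2 ω - S p.1 p.2 ω) inferInstance] (G p) := by
          rw [hGeq]; exact ⟨Metric.ball 0 τ, measurableSet_ball, rfl⟩
        exact le_iSup (fun t : ι => MeasurableSpace.comap
          (fun ω => S n t ω - S p.1 t ω) inferInstance) p.2 _ h1
      have hprod : P (G p ∩ E p) = P (G p) * P (E p) :=
        (Indep_iff _ _ _).mp (hindep p.1 hv.1 hv.2) (G p) (E p) hGmem (hE𝔪 p hv.1 hv.2)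
      calc ENNReal.ofReal (1 - c) * P (E p) ≤ P (G p) * P (E p) :=
            mul_le_mul_left (hGlb p hv.2) _
        _ = P (G p ∩ E p) := hprod.symm
        _ ≤ P (E p ∩ F) := measure_mono (hGEF p)
    · have : E p = ∅ := by
        rw [hEdef]
        simp only [hBadempty p hv, Set.empty_inter]
      simp [this]
  -- the union decomposition
  have hunion : {ω | ∃ t, ∃ m, 1 ≤ m ∧ m ≤ n ∧ S m t ω ∉ thickening (ε + τ) A} = ⋃ p, E p := by
    ext ω
    simp only [Set.mem_setOf_eq, Set.mem_iUnion]
    constructor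
    · rintro ⟨t, m, h1, h2, h3⟩
      have hne : (r '' {p | ω ∈ Bad p}).Nonempty :=
        ⟨r (m, t), ⟨(m, t), ⟨h1, h2, h3⟩, rfl⟩⟩
      obtain ⟨x, ⟨p, hp, rfl⟩, hmin⟩ :=
        (IsWellFounded.wf : WellFounded ((· < ·) : ℕ ×ₗ ℕ → ℕ ×ₗ ℕ → Prop)).has_min _ hne
      refine ⟨p, hp, ?_⟩
      rw [Set.mem_iInter]
      intro q
      rw [Set.mem_iInter]
      intro hq hbad
      exact hmin (r q) ⟨q, hbad, rfl⟩ hq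
    · rintro ⟨p, hp, _⟩
      exact ⟨p.2, p.1, hp.1, hp.2.1, hp.2.2⟩
  -- disjointness of E p ∩ F
  have hdisj : Pairwise (Function.onFun Disjoint fun p => E p ∩ F) := by
    intro p q hpq
    have hrpq : r p ≠ r q := fun h => hpq (hr h)
    rcases lt_or_gt_of_ne hrpq with h | h
    · rw [Function.onFun, Set.disjoint_left]
      rintro ω ⟨hEp, _⟩ ⟨hEq, _⟩
      have h1 : ω ∈ Bad p := hEp.1
      have h2 : ω ∉ Bad p := by
        have := hEq.2
        rw [Set.mem_iInter] at this
        have := this p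
        rw [Set.mem_iInter] at this
        exact this h
      exact h2 h1
    · rw [Function.onFun, Set.disjoint_left]
      rintro ω ⟨hEp, _⟩ ⟨hEq, _⟩
      have h1 : ω ∈ Bad q := hEq.1
      have h2 : ω ∉ Bad q := by
        have := hEp.2
        rw [Set.mem_iInter] at this
        have := this q
        rw [Set.mem_iInter] at this
        exact this h
      exact h2 h1
  -- main estimate
  have main : ENNReal.ofReal (1 - c) *
      P {ω | ∃ t, ∃ m, 1 ≤ m ∧ m ≤ n ∧ S m t ω ∉ thickening (ε + τ) A} ≤ P F := by
    rw [hunion]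
    calc ENNReal.ofReal (1 - c) * P (⋃ p, E p)
        ≤ ENNReal.ofReal (1 - c) * ∑' p, P (E p) :=
          mul_le_mul_right (measure_iUnion_le _) _
      _ = ∑' p, ENNReal.ofReal (1 - c) * P (E p) := ENNReal.tsum_mul_left.symm
      _ ≤ ∑' p, P (E p ∩ F) := ENNReal.tsum_le_tsum key
      _ = P (⋃ p, E p ∩ F) := (measure_iUnion hdisj fun p => (hEm p).inter hFm).symm
      _ ≤ P F := measure_mono (Set.iUnion_subset fun p => Set.inter_subset_right)
  -- conclude
  have h1c : (0 : ℝ) < 1 - c := by linarith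
  have ha0 : ENNReal.ofReal (1 - c) ≠ 0 := ne_of_gt (ENNReal.ofReal_pos.mpr h1c)
  have hat : ENNReal.ofReal (1 - c) ≠ ⊤ := ENNReal.ofReal_ne_top
  rw [ENNReal.ofReal_inv_of_pos h1c]
  calc P {ω | ∃ t, ∃ m, 1 ≤ m ∧ m ≤ n ∧ S m t ω ∉ thickening (ε + τ) A}
      = (ENNReal.ofReal (1 - c))⁻¹ * (ENNReal.ofReal (1 - c) *
        P {ω | ∃ t, ∃ m, 1 ≤ m ∧ m ≤ n ∧ S m t ω ∉ thickening (ε + τ) A}) := by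
        rw [← mul_assoc, ENNReal.inv_mul_cancel ha0 hat, one_mul]
    _ ≤ (ENNReal.ofReal (1 - c))⁻¹ * P F := mul_le_mul_right main _
end

section
/- Let f be a density that satisfies 0 < β_1 ≤ f(z) ≤ β_2 < ∞ for all z in J_γ, the γ-neighborhood of a compact set J. Let g be measurable with support in I^d = [-1/2,1/2]^d and bounded, and let Z have density f. Then for z, z' ∈ J with the cubes z - h^{1/d} I^d and z' - h^{1/d} I^d contained in J_γ, E[(g(h^{-1/d}(z - Z)) - g(h^{-1/d}(z' - Z)))^2] ≤ (2 β_2^2 / β_1) · h · ∫_{R^d} [g(x) - g(x + h^{-1/d}(z' - z))]^2 dx. -/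
open MeasureTheory Metric

/-- If the density `f` satisfies `0 < β₁ ≤ f ≤ β₂` on the `γ`-neighborhood `J_γ` of a compact set
`J`, `g` is bounded, measurable and supported in `I^d`, and both cubes `z - h^{1/d} I^d` and
`z' - h^{1/d} I^d` lie in `J_γ`, then
`E[(g(h^{-1/d}(z-Z)) - g(h^{-1/d}(z'-Z)))²] ≤ (2β₂²/β₁) h ∫ (g(x) - g(x + h^{-1/d}(z'-z)))² dx`. -/
theorem stmt_8 (d : ℕ) (hd : 0 < d)
    (f g : EuclideanSpace ℝ (Fin d) → ℝ)
    (J : Set (EuclideanSpace ℝ (Fin d))) (hJ : IsCompact J)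
    (γ β₁ β₂ κ : ℝ) (hγ : 0 < γ) (hβ₁ : 0 < β₁)
    (hfmeas : Measurable f) (hf0 : ∀ x, 0 ≤ f x) (hfint : ∫ x, f x = 1)
    (hβ : ∀ x ∈ cthickening γ J, β₁ ≤ f x ∧ f x ≤ β₂)
    (hgmeas : Measurable g) (hgb : ∀ x, |g x| ≤ κ) (hgsupp : ∀ x, x ∉ unitCube d → g x = 0)
    (h : ℝ) (hh : 0 < h) (z z' : EuclideanSpace ℝ (Fin d)) (hz : z ∈ J) (hz' : z' ∈ J)
    (hcz : (fun u => z - h ^ (1 / (d:ℝ)) • u) '' unitCube d ⊆ cthickening γ J)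
    (hcz' : (fun u => z' - h ^ (1 / (d:ℝ)) • u) '' unitCube d ⊆ cthickening γ J) :
    (∫ x, (g ((h ^ (1 / (d:ℝ)))⁻¹ • (z - x)) - g ((h ^ (1 / (d:ℝ)))⁻¹ • (z' - x))) ^ 2 * f x) ≤
      2 * β₂ ^ 2 / β₁ * h *
        ∫ x, (g x - g (x + (h ^ (1 / (d:ℝ)))⁻¹ • (z' - z))) ^ 2 := by

  classical
  set c : ℝ := h ^ (1 / (d:ℝ)) with hcdef
  have hc : 0 < c := Real.rpow_pos_of_pos hh _
  have hcd : c ^ d = h := by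
    rw [hcdef, ← Real.rpow_natCast (h ^ (1/(d:ℝ))) d, ← Real.rpow_mul hh.le]
    rw [one_div_mul_cancel (by exact_mod_cast hd.ne' : (d:ℝ) ≠ 0), Real.rpow_one]
  have hκ : 0 ≤ κ := (abs_nonneg _).trans (hgb 0)
  -- integrability of f
  have hfInt : Integrable f := by
    by_contra hnot
    rw [integral_undef hnot] at hfint
    norm_num at hfint
  -- compactness of the unit cube
  have hcube : IsCompact (unitCube d) := by
    have heq : unitCube d = ⇑(EuclideanSpace.equiv (Fin d) ℝ).symm ''
        (Set.pi Set.univ fun _ : Fin d => Set.Icc (-(1/2):ℝ) (1/2)) := by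
      ext x
      constructor
      · intro hx
        refine ⟨⇑(EuclideanSpace.equiv (Fin d) ℝ) x, fun i _ => ?_, by simp⟩
        have := hx i
        simpa [abs_le] using this
      · rintro ⟨y, hy, rfl⟩
        intro i
        have := hy i (Set.mem_univ i)
        simpa [abs_le] using this
    rw [heq]
    exact (isCompact_univ_pi fun _ => isCompact_Icc).image
      (EuclideanSpace.equiv (Fin d) ℝ).symm.continuous
  -- support lemma
  have hsupp : ∀ (w x : EuclideanSpace ℝ (Fin d)), g (c⁻¹ • (w - x)) ≠ 0 →
      x ∈ (fun u => w - c • u) '' unitCube d := by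
    intro w x hgx
    refine ⟨c⁻¹ • (w - x), ?_, ?_⟩
    · by_contra hu
      exact hgx (hgsupp _ hu)
    · simp only [smul_inv_smul₀ hc.ne']
      abel
  set S : EuclideanSpace ℝ (Fin d) → ℝ :=
    fun x => (g (c⁻¹ • (z - x)) - g (c⁻¹ • (z' - x))) ^ 2 with hSdef
  have hSnn : ∀ x, 0 ≤ S x := fun x => sq_nonneg _
  have hSb : ∀ x, S x ≤ (2*κ)^2 := by
    intro x
    have h1 := abs_le.mp (hgb (c⁻¹ • (z - x)))
    have h2 := abs_le.mp (hgb (c⁻¹ • (z' - x)))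
    simp only [hSdef]
    nlinarith [h1.1, h1.2, h2.1, h2.2]
  have hSmeas : Measurable S := by
    have m1 : Measurable fun x : EuclideanSpace ℝ (Fin d) => c⁻¹ • (z - x) := by
      fun_prop
    have m2 : Measurable fun x : EuclideanSpace ℝ (Fin d) => c⁻¹ • (z' - x) := by
      fun_prop
    exact ((hgmeas.comp m1).sub (hgmeas.comp m2)).pow_const 2
  -- integrability of S
  set K : Set (EuclideanSpace ℝ (Fin d)) :=
    ((fun u => z - c • u) '' unitCube d) ∪ ((fun u => z' - c • u) '' unitCube d) with hKdef
  have hKcomp : IsCompact K := by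
    refine IsCompact.union ?_ ?_ <;>
      exact hcube.image (continuous_const.sub (continuous_const_smul c))
  have hSzero : ∀ x, x ∉ K → S x = 0 := by
    intro x hx
    have h1 : g (c⁻¹ • (z - x)) = 0 := by
      by_contra hne
      exact hx (Or.inl (hsupp z x hne))
    have h2 : g (c⁻¹ • (z' - x)) = 0 := by
      by_contra hne
      exact hx (Or.inr (hsupp z' x hne))
    simp [hSdef, h1, h2]
  have hSInt : Integrable S := by
    refine Integrable.mono' (g := K.indicator fun _ => (2*κ)^2)
      ((integrable_indicator_iff hKcomp.isClosed.measurableSet).mpr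
        ((integrableOn_const_iff).mpr (Or.inr hKcomp.measure_lt_top)))
      hSmeas.aestronglyMeasurable (Filter.Eventually.of_forall fun x => ?_)
    · rw [Real.norm_eq_abs, abs_of_nonneg (hSnn x)]
      by_cases hx : x ∈ K
      · rw [Set.indicator_of_mem hx]
        exact hSb x
      · rw [Set.indicator_of_notMem hx, hSzero x hx]
  -- Step 1: ∫ S * f ≤ β₂ * ∫ S
  have hβ₁₂ : β₁ ≤ β₂ := by
    have hzJ : z ∈ cthickening γ J := self_subset_cthickening J hz
    exact (hβ z hzJ).1.trans (hβ z hzJ).2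
  have hβ₂0 : 0 ≤ β₂ := hβ₁.le.trans hβ₁₂
  have hpt : ∀ x, S x * f x ≤ β₂ * S x := by
    intro x
    by_cases hS0 : S x = 0
    · simp [hS0]
    · have : g (c⁻¹ • (z - x)) ≠ 0 ∨ g (c⁻¹ • (z' - x)) ≠ 0 := by
        by_contra hcon
        push_neg at hcon
        exact hS0 (by simp [hSdef, hcon.1, hcon.2])
      have hxth : x ∈ cthickening γ J := by
        rcases this with hne | hne
        · exact hcz (hsupp z x hne)
        · exact hcz' (hsupp z' x hne)
      have hfx : f x ≤ β₂ := (hβ x hxth).2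
      calc S x * f x ≤ S x * β₂ := mul_le_mul_of_nonneg_left hfx (hSnn x)
        _ = β₂ * S x := mul_comm _ _
  have hSfInt : Integrable (fun x => S x * f x) := by
    refine Integrable.mono' (g := fun x => (2*κ)^2 * f x) (hfInt.const_mul _)
      ((hSmeas.mul hfmeas).aestronglyMeasurable) (Filter.Eventually.of_forall fun x => ?_)
    rw [Real.norm_eq_abs, abs_of_nonneg (mul_nonneg (hSnn x) (hf0 x))]
    exact mul_le_mul_of_nonneg_right (hSb x) (hf0 x)
  have step1 : (∫ x, S x * f x) ≤ β₂ * ∫ x, S x := by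
    rw [← integral_const_mul]
    exact integral_mono hSfInt (hSInt.const_mul _) hpt
  -- Step 2: change of variables
  set δ : EuclideanSpace ℝ (Fin d) := c⁻¹ • (z' - z) with hδdef
  set T : EuclideanSpace ℝ (Fin d) → ℝ :=
    fun y => (g (c⁻¹ • y) - g (c⁻¹ • y + δ)) ^ 2 with hTdef
  have hST : ∀ x, S x = T (z - x) := by
    intro x
    have : c⁻¹ • (z' - x) = c⁻¹ • (z - x) + δ := by
      rw [hδdef, ← smul_add]
      congr 1
      abel
    simp [hSdef, hTdef, this]
  have step2a : (∫ x, S x) = ∫ y, T y := by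
    simp_rw [hST]
    exact integral_sub_left_eq_self T volume z
  have step2b : (∫ y, T y) = h * ∫ u, (g u - g (u + δ)) ^ 2 := by
    have hct : ∀ u : EuclideanSpace ℝ (Fin d), T (c • u) = (g u - g (u + δ)) ^ 2 := by
      intro u
      simp [hTdef, inv_smul_smul₀ hc.ne']
    have := MeasureTheory.Measure.integral_comp_smul (volume : Measure (EuclideanSpace ℝ (Fin d))) T c
    rw [show (Module.finrank ℝ (EuclideanSpace ℝ (Fin d))) = d from finrank_euclideanSpace_fin] at this
    simp_rw [hct] at this
    rw [this, hcd, smul_eq_mul, abs_of_nonneg (inv_nonneg.mpr hh.le), ← mul_assoc,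
      mul_inv_cancel₀ hh.ne', one_mul]
  -- combine
  have hI0 : 0 ≤ ∫ u, (g u - g (u + δ)) ^ 2 := integral_nonneg fun u => sq_nonneg _
  have hfinal : β₂ * (h * ∫ u, (g u - g (u + δ)) ^ 2) ≤
      2 * β₂ ^ 2 / β₁ * h * ∫ u, (g u - g (u + δ)) ^ 2 := by
    have hβle : β₂ ≤ 2 * β₂ ^ 2 / β₁ := by
      rw [le_div_iff₀ hβ₁]
      nlinarith
    have := mul_le_mul_of_nonneg_right hβle (mul_nonneg hh.le hI0)
    calc β₂ * (h * ∫ u, (g u - g (u + δ)) ^ 2) ≤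
        2 * β₂ ^ 2 / β₁ * (h * ∫ u, (g u - g (u + δ)) ^ 2) := this
      _ = 2 * β₂ ^ 2 / β₁ * h * ∫ u, (g u - g (u + δ)) ^ 2 := by ring
  calc (∫ x, S x * f x) ≤ β₂ * ∫ x, S x := step1
    _ = β₂ * (h * ∫ u, (g u - g (u + δ)) ^ 2) := by rw [step2a, step2b]
    _ ≤ _ := hfinal
end

section
/- Let Z have Lebesgue density f on R^d with f continuous at z and f(z) > 0, let g_1, g_2 be bounded measurable functions supported in I^d = [-1/2,1/2]^d, and for h ∈ (0,1) define σ_h(g_1, g_2) = (h f(z))^{-1} Cov(g_1(h^{-1/d}(z - Z)), g_2(h^{-1/d}(z - Z))). If additionally f is bounded and uniformly continuous on a neighborhood of z, then σ_h(g_1, g_2) → ∫_{I^d} g_1(u) g_2(u) du as h ↓ 0. -/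
open MeasureTheory Filter

lemma coord_meas (d : ℕ) (i : Fin d) :
    Measurable (fun x : EuclideanSpace ℝ (Fin d) => x i) :=
  (PiLp.proj 2 (𝕜 := ℝ) (fun _ : Fin d => ℝ) i).continuous.measurable

lemma cube_meas (d : ℕ) : MeasurableSet (unitCube d) := by
  have : unitCube d = ⋂ i, {x : EuclideanSpace ℝ (Fin d) | |x i| ≤ 1/2} := by
    ext x; simp [unitCube]
  rw [this]
  exact MeasurableSet.iInter fun i =>
    measurableSet_le ((coord_meas d i).abs) measurable_const

lemma cube_norm {d : ℕ} {x : EuclideanSpace ℝ (Fin d)} (hx : x ∈ unitCube d) :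
    ‖x‖ ≤ Real.sqrt d := by
  rw [EuclideanSpace.norm_eq]
  apply Real.sqrt_le_sqrt
  calc ∑ i, ‖x i‖ ^ 2 ≤ ∑ _i : Fin d, (1:ℝ) := by
        apply Finset.sum_le_sum
        intro i _
        have h1 : ‖x i‖ ≤ 1/2 := by rw [Real.norm_eq_abs]; exact hx i
        nlinarith [norm_nonneg (x i)]
    _ = d := by simp

lemma cube_vol_lt_top (d : ℕ) : volume (unitCube d) < ⊤ :=
  lt_of_le_of_lt (measure_mono fun x hx => by
    simpa [Metric.mem_closedBall, dist_zero_right] using cube_norm hx)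
    (measure_closedBall_lt_top (x := 0) (r := Real.sqrt d))

lemma change_var (d : ℕ) (hd : 0 < d) (f g : EuclideanSpace ℝ (Fin d) → ℝ)
    (z : EuclideanSpace ℝ (Fin d)) {h : ℝ} (hh : 0 < h) :
    ∫ x, g ((h ^ (1 / (d:ℝ)))⁻¹ • (z - x)) * f x
      = h * ∫ u, g u * f (z - (h ^ (1 / (d:ℝ))) • u) := by
  set r := h ^ (1 / (d:ℝ)) with hrdef
  have hrpos : 0 < r := Real.rpow_pos_of_pos hh _
  calc ∫ x, g (r⁻¹ • (z - x)) * f x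
      = ∫ y, g (r⁻¹ • y) * f (z - y) := by
        rw [← integral_sub_left_eq_self (fun y => g (r⁻¹ • y) * f (z - y)) volume z]
        simp
    _ = ∫ y, (fun u => g u * f (z - r • u)) (r⁻¹ • y) := by
        congr 1; ext y
        simp [smul_smul, mul_inv_cancel₀ hrpos.ne']
    _ = |(r⁻¹ ^ Module.finrank ℝ (EuclideanSpace ℝ (Fin d)))⁻¹| •
          ∫ u, g u * f (z - r • u) :=
        MeasureTheory.Measure.integral_comp_smul volume (fun u => g u * f (z - r • u)) r⁻¹
    _ = h * ∫ u, g u * f (z - r • u) := by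
        rw [finrank_euclideanSpace_fin, smul_eq_mul]
        congr 1
        rw [inv_pow, inv_inv, abs_of_pos (pow_pos hrpos _), ← Real.rpow_natCast r d,
          hrdef, ← Real.rpow_mul hh.le,
          one_div_mul_cancel (Nat.cast_ne_zero.2 hd.ne' : (d:ℝ) ≠ 0), Real.rpow_one]

lemma aux_tendsto (d : ℕ) (hd : 0 < d) (f g : EuclideanSpace ℝ (Fin d) → ℝ)
    (z : EuclideanSpace ℝ (Fin d)) (hfmeas : Measurable f) (hf0 : ∀ x, 0 ≤ f x)
    (U : Set (EuclideanSpace ℝ (Fin d))) (hU : U ∈ nhds z)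
    (M : ℝ) (hfb : ∀ x ∈ U, f x ≤ M)
    (hfuc : ∀ ε : ℝ, 0 < ε → ∃ δ : ℝ, 0 < δ ∧
      ∀ x ∈ U, ∀ y ∈ U, dist x y < δ → |f x - f y| < ε)
    (κ : ℝ) (hgmeas : Measurable g) (hgb : ∀ x, |g x| ≤ κ)
    (hgsupp : ∀ x, x ∉ unitCube d → g x = 0) :
    Tendsto (fun h : ℝ => ∫ u, g u * f (z - (h ^ (1 / (d:ℝ))) • u))
      (nhdsWithin 0 (Set.Ioi 0)) (nhds (f z * ∫ u in unitCube d, g u)) := by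
  have hzU : z ∈ U := mem_of_mem_nhds hU
  set l : Filter ℝ := nhdsWithin 0 (Set.Ioi 0) with hl
  set r : ℝ → ℝ := fun h => h ^ (1 / (d:ℝ)) with hrdef
  have hdne : (1 / (d:ℝ)) ≠ 0 := one_div_ne_zero (Nat.cast_ne_zero.2 hd.ne')
  have hr : Tendsto r l (nhds 0) := by
    have hcont : ContinuousAt (fun x : ℝ => x ^ (1 / (d:ℝ))) 0 :=
      Real.continuousAt_rpow_const 0 _ (Or.inr (by positivity))
    have h0 : (0:ℝ) ^ (1 / (d:ℝ)) = 0 := Real.zero_rpow hdne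
    have := hcont.tendsto.mono_left (nhdsWithin_le_nhds (s := Set.Ioi 0))
    rw [h0] at this
    exact this
  obtain ⟨ε, hε, hball⟩ := Metric.mem_nhds_iff.1 hU
  -- eventually, for all u in the cube, z - r h • u ∈ U
  have hev : ∀ᶠ h in l, ∀ u ∈ unitCube d, z - r h • u ∈ U := by
    have h1 : ∀ᶠ h in l, |r h| < ε / (Real.sqrt d + 1) := by
      have : 0 < ε / (Real.sqrt d + 1) := by positivity
      have := Metric.tendsto_nhds.1 hr _ this
      filter_upwards [this] with h hh
      simpa [Real.dist_eq] using hh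
    filter_upwards [h1] with h hh u hu
    apply hball
    have hnu : ‖u‖ ≤ Real.sqrt d := cube_norm hu
    have : ‖z - r h • u - z‖ < ε := by
      rw [sub_sub_cancel_left, norm_neg, norm_smul, Real.norm_eq_abs]
      calc |r h| * ‖u‖ ≤ |r h| * (Real.sqrt d + 1) := by
            apply mul_le_mul_of_nonneg_left _ (abs_nonneg _)
            linarith
        _ < (ε / (Real.sqrt d + 1)) * (Real.sqrt d + 1) := by
            apply mul_lt_mul_of_pos_right hh
            positivity
        _ = ε := by field_simp
    simpa [Metric.mem_ball, dist_eq_norm] using this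
  have hκ : 0 ≤ κ := le_trans (abs_nonneg _) (hgb 0)
  -- continuity of f at z within U
  have hfcont : Tendsto f (nhdsWithin z U) (nhds (f z)) := by
    rw [Metric.tendsto_nhdsWithin_nhds]
    intro ε' hε'
    obtain ⟨δ, hδ, hδ'⟩ := hfuc ε' hε'
    exact ⟨δ, hδ, fun {x} hx hdx => by rw [Real.dist_eq]; exact hδ' x hx z hzU hdx⟩
  have hval : (∫ u, g u * f z) = f z * ∫ u in unitCube d, g u := by
    rw [integral_mul_const, setIntegral_eq_integral_of_forall_compl_eq_zero hgsupp, mul_comm]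
  rw [← hval]
  apply tendsto_integral_filter_of_dominated_convergence
    ((unitCube d).indicator (fun _ => κ * M))
  · filter_upwards with h
    exact (hgmeas.mul (hfmeas.comp
      (measurable_const.sub (measurable_id.const_smul (r h))))).aestronglyMeasurable
  · filter_upwards [hev] with h hh
    filter_upwards with u
    by_cases hu : u ∈ unitCube d
    · rw [Set.indicator_of_mem hu]
      have hfU : f (z - r h • u) ≤ M := hfb _ (hh u hu)
      rw [Real.norm_eq_abs, abs_mul, abs_of_nonneg (hf0 _)]
      exact mul_le_mul (hgb u) hfU (hf0 _) hκ
    · rw [Set.indicator_of_notMem hu, hgsupp u hu]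
      simp
  · rw [integrable_indicator_iff (cube_meas d)]
    exact integrableOn_const (cube_vol_lt_top d).ne
  · filter_upwards with u
    by_cases hu : u ∈ unitCube d
    · apply Tendsto.const_mul
      apply hfcont.comp
      rw [tendsto_nhdsWithin_iff]
      constructor
      · have : Tendsto (fun h => z - r h • u) l (nhds (z - (0:ℝ) • u)) :=
          tendsto_const_nhds.sub (hr.smul_const u)
        simpa [hrdef] using this
      · filter_upwards [hev] with h hh using hh u hu
    · simp [hgsupp u hu]

/-- Convergence of the normalized local covariance: if `f` is a density, positive at `z`,
bounded and uniformly continuous on a neighborhood `U` of `z`, and `g₁, g₂` are bounded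
measurable functions supported in `I^d`, then
`σ_h(g₁,g₂) = (h f(z))⁻¹ Cov(g₁(h^{-1/d}(z-Z)), g₂(h^{-1/d}(z-Z))) → ∫_{I^d} g₁ g₂` as `h ↓ 0`. -/
theorem stmt_10 (d : ℕ) (hd : 0 < d)
    (f g₁ g₂ : EuclideanSpace ℝ (Fin d) → ℝ) (z : EuclideanSpace ℝ (Fin d))
    (hfmeas : Measurable f) (hf0 : ∀ x, 0 ≤ f x) (hfint : ∫ x, f x = 1)
    (hfz : 0 < f z)
    (U : Set (EuclideanSpace ℝ (Fin d))) (hU : U ∈ nhds z)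
    (M : ℝ) (hfb : ∀ x ∈ U, f x ≤ M)
    (hfuc : ∀ ε : ℝ, 0 < ε → ∃ δ : ℝ, 0 < δ ∧
      ∀ x ∈ U, ∀ y ∈ U, dist x y < δ → |f x - f y| < ε)
    (κ₁ κ₂ : ℝ)
    (hg₁meas : Measurable g₁) (hg₁b : ∀ x, |g₁ x| ≤ κ₁)
    (hg₁supp : ∀ x, x ∉ unitCube d → g₁ x = 0)
    (hg₂meas : Measurable g₂) (hg₂b : ∀ x, |g₂ x| ≤ κ₂)
    (hg₂supp : ∀ x, x ∉ unitCube d → g₂ x = 0) :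
    Tendsto (fun h : ℝ => (h * f z)⁻¹ *
        ((∫ x, g₁ ((h ^ (1 / (d:ℝ)))⁻¹ • (z - x)) * g₂ ((h ^ (1 / (d:ℝ)))⁻¹ • (z - x)) * f x) -
          (∫ x, g₁ ((h ^ (1 / (d:ℝ)))⁻¹ • (z - x)) * f x) *
            ∫ x, g₂ ((h ^ (1 / (d:ℝ)))⁻¹ • (z - x)) * f x))
      (nhdsWithin 0 (Set.Ioi 0)) (nhds (∫ x in unitCube d, g₁ x * g₂ x)) := by
  set l : Filter ℝ := nhdsWithin 0 (Set.Ioi 0) with hl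
  -- bounded/support facts for the product g₁ * g₂
  have hg12b : ∀ x, |g₁ x * g₂ x| ≤ κ₁ * κ₂ := fun x => by
    rw [abs_mul]
    exact mul_le_mul (hg₁b x) (hg₂b x) (abs_nonneg _)
      (le_trans (abs_nonneg _) (hg₁b x))
  have hg12supp : ∀ x, x ∉ unitCube d → g₁ x * g₂ x = 0 := fun x hx => by
    rw [hg₁supp x hx, zero_mul]
  -- the three convergence facts
  have T12 := aux_tendsto d hd f (fun u => g₁ u * g₂ u) z hfmeas hf0 U hU M hfb hfuc
    (κ₁ * κ₂) (hg₁meas.mul hg₂meas) hg12b hg12supp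
  have T1 := aux_tendsto d hd f g₁ z hfmeas hf0 U hU M hfb hfuc κ₁ hg₁meas hg₁b hg₁supp
  have T2 := aux_tendsto d hd f g₂ z hfmeas hf0 U hU M hfb hfuc κ₂ hg₂meas hg₂b hg₂supp
  have hid : Tendsto (fun h : ℝ => h) l (nhds 0) :=
    tendsto_id.mono_left nhdsWithin_le_nhds
  -- the reparametrized expression converges
  have Tmain : Tendsto (fun h : ℝ =>
      (f z)⁻¹ * (∫ u, g₁ u * g₂ u * f (z - (h ^ (1 / (d:ℝ))) • u)) -
        h * ((f z)⁻¹ * ((∫ u, g₁ u * f (z - (h ^ (1 / (d:ℝ))) • u)) *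
          (∫ u, g₂ u * f (z - (h ^ (1 / (d:ℝ))) • u))))) l
      (nhds ((f z)⁻¹ * (f z * ∫ u in unitCube d, g₁ u * g₂ u) -
        0 * ((f z)⁻¹ * ((f z * ∫ u in unitCube d, g₁ u) *
          (f z * ∫ u in unitCube d, g₂ u))))) :=
    ((tendsto_const_nhds.mul T12).sub
      (hid.mul (tendsto_const_nhds.mul (T1.mul T2))))
  rw [zero_mul, sub_zero, inv_mul_cancel_left₀ hfz.ne'] at Tmain
  -- eventual equality of the two expressions
  apply Tmain.congr'
  filter_upwards [self_mem_nhdsWithin] with h (hh : h ∈ Set.Ioi 0)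
  have hh' : (0:ℝ) < h := hh
  have c12 := change_var d hd f (fun u => g₁ u * g₂ u) z hh'
  have c1 := change_var d hd f g₁ z hh'
  have c2 := change_var d hd f g₂ z hh'
  rw [c12, c1, c2]
  field_simp
end
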